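/- arXiv:math/0312419 — 2 statements merged into one kernel-verified Lean document; each statement's English description precedes it below -/
import Mathlib

section
/- For l > 0 and L > 0, the function u(L;x) = L^{-1} arcsin( (1 - c e^{2L(1-x)}) / (1 + c e^{2L(1-x)}) ), where c = (1-L)/(1+L) and 0 < L < 1, satisfies the ordinary differential equation u'' = L cot(Lu) (u'^2 - 1) on the interval (1, ∞). -/
open Real

theorem noded_solution_satisfies_ode (L : ℝ) (hL : 0 < L) (hL1 : L < 1)
    (c : ℝ) (hc : c = (1 - L) / (1 + L))
    (u : ℝ → ℝ)
    (hu : u = fun x : ℝ =>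
      L⁻¹ * arcsin ((1 - c * exp (2 * L * (1 - x))) / (1 + c * exp (2 * L * (1 - x))))) :
    ∀ x ∈ Set.Ioi (1 : ℝ),
      deriv (deriv u) x
        = L * (cos (L * u x) / sin (L * u x)) * ((deriv u x) ^ 2 - 1) := by
  have hcpos : 0 < c := by
    rw [hc]; apply div_pos <;> linarith
  have hc1 : c < 1 := by
    rw [hc, div_lt_one (by linarith)]; linarith
  have hsc : Real.sqrt c ^ 2 = c := Real.sq_sqrt hcpos.le
  have hscpos : 0 < Real.sqrt c := Real.sqrt_pos.mpr hcpos
  set v : ℝ → ℝ := fun x => 2 * Real.sqrt c * exp (L * (1 - x)) / (1 + c * exp (2 * L * (1 - x))) with hv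
  -- inner function derivative
  have hg : ∀ x : ℝ, HasDerivAt (fun y => c * exp (2 * L * (1 - y)))
      (c * exp (2 * L * (1 - x)) * (2 * L * -1)) x := by
    intro x
    have h1 : HasDerivAt (fun y : ℝ => 2 * L * (1 - y)) (2 * L * -1) x :=
      ((hasDerivAt_id x).const_sub 1).const_mul (2 * L)
    have h2 := h1.exp
    have h3 := h2.const_mul c
    exact h3.congr_deriv (by ring)
  have key : ∀ x : ℝ, HasDerivAt u (v x) x := by
    intro x
    set E := exp (2 * L * (1 - x)) with hE
    set F := exp (L * (1 - x)) with hF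
    have hEpos : 0 < E := exp_pos _
    have hFpos : 0 < F := exp_pos _
    have hFE : F ^ 2 = E := by
      rw [hE, hF, show (2 * L * (1 - x)) = L * (1 - x) + L * (1 - x) by ring, Real.exp_add]
      ring
    have hD : (0:ℝ) < 1 + c * E := by positivity
    have hnum : HasDerivAt (fun y => 1 - c * exp (2 * L * (1 - y))) (-(c * E * (2 * L * -1))) x :=
      (hg x).const_sub 1
    have hden : HasDerivAt (fun y => 1 + c * exp (2 * L * (1 - y))) (c * E * (2 * L * -1)) x :=
      (hg x).const_add 1
    have hs : HasDerivAt (fun y => (1 - c * exp (2 * L * (1 - y))) / (1 + c * exp (2 * L * (1 - y))))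
        ((-(c * E * (2 * L * -1)) * (1 + c * E) - (1 - c * E) * (c * E * (2 * L * -1))) / (1 + c * E) ^ 2) x :=
      hnum.div hden hD.ne'
    set s := (1 - c * E) / (1 + c * E) with hsdef
    have hslt : s < 1 := by
      rw [hsdef, div_lt_one hD]; nlinarith
    have hsgt : -1 < s := by
      rw [hsdef, lt_div_iff₀ hD]; nlinarith
    have harc := (Real.hasDerivAt_arcsin (ne_of_gt hsgt) (ne_of_lt hslt)).comp x hs
    have hu2 := harc.const_mul L⁻¹
    have hsq : Real.sqrt (1 - s ^ 2) = 2 * Real.sqrt c * F / (1 + c * E) := by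
      have h1 : 1 - s ^ 2 = (2 * Real.sqrt c * F / (1 + c * E)) ^ 2 := by
        rw [hsdef]
        field_simp
        linear_combination (-4*F^2)*hsc + (-4*c)*hFE
      rw [h1, Real.sqrt_sq (by positivity)]
    rw [hu]
    refine hu2.congr_deriv (Eq.symm ?_)
    rw [hsq, hv]
    simp only [← hE, ← hF]
    field_simp
    linear_combination (2*F^2)*hsc + (2*c)*hFE
  have hderivu : deriv u = v := funext fun x => (key x).deriv
  intro x hx
  simp only [Set.mem_Ioi] at hx
  set E := exp (2 * L * (1 - x)) with hE
  set F := exp (L * (1 - x)) with hF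
  have hEpos : 0 < E := exp_pos _
  have hFpos : 0 < F := exp_pos _
  have hFE : F ^ 2 = E := by
    rw [hE, hF, show (2 * L * (1 - x)) = L * (1 - x) + L * (1 - x) by ring, Real.exp_add]
    ring
  have hD : (0:ℝ) < 1 + c * E := by positivity
  have hE1 : E < 1 := by
    rw [hE, exp_lt_one_iff]; nlinarith
  have hcE1 : c * E < 1 := by nlinarith
  -- derivative of v at x
  have hFd : HasDerivAt (fun y : ℝ => 2 * Real.sqrt c * exp (L * (1 - y)))
      (2 * Real.sqrt c * (F * (L * -1))) x := by
    have h1 : HasDerivAt (fun y : ℝ => L * (1 - y)) (L * -1) x :=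
      ((hasDerivAt_id x).const_sub 1).const_mul L
    exact h1.exp.const_mul _
  have hden : HasDerivAt (fun y : ℝ => 1 + c * exp (2 * L * (1 - y))) (c * E * (2 * L * -1)) x :=
    (hg x).const_add 1
  have hvd : HasDerivAt v
      ((2 * Real.sqrt c * (F * (L * -1)) * (1 + c * E) - 2 * Real.sqrt c * F * (c * E * (2 * L * -1))) / (1 + c * E) ^ 2) x :=
    hFd.div hden hD.ne'
  rw [hderivu, hvd.deriv]
  -- sin and cos of L * u x
  set s := (1 - c * E) / (1 + c * E) with hsdef
  have hslt : s < 1 := by rw [hsdef, div_lt_one hD]; nlinarith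
  have hsgt : -1 < s := by rw [hsdef, lt_div_iff₀ hD]; nlinarith
  have hcE1' : (0:ℝ) < 1 - c * E := by nlinarith
  have hspos : 0 < s := by rw [hsdef]; exact div_pos hcE1' hD
  have hLu : L * u x = arcsin s := by
    rw [hu]
    simp only
    rw [← mul_assoc, mul_inv_cancel₀ hL.ne', one_mul, ← hE, hsdef]
  have hsin : sin (L * u x) = s := by
    rw [hLu, Real.sin_arcsin hsgt.le hslt.le]
  have hsq : Real.sqrt (1 - s ^ 2) = 2 * Real.sqrt c * F / (1 + c * E) := by
    have h1 : 1 - s ^ 2 = (2 * Real.sqrt c * F / (1 + c * E)) ^ 2 := by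
      rw [hsdef]; field_simp; linear_combination (-4*F^2)*hsc + (-4*c)*hFE
    rw [h1, Real.sqrt_sq (by positivity)]
  have hcos : cos (L * u x) = 2 * Real.sqrt c * F / (1 + c * E) := by
    rw [hLu, Real.cos_arcsin, hsq]
  rw [hsin, hcos, hv]
  simp only [← hE, ← hF]
  have h1cE : (0:ℝ) < 1 - c * E := by linarith
  rw [hsdef]
  field_simp
  linear_combination (-4*F^2)*hsc + (-4*c)*hFE
end

section
/- Let 0 < l < 1, a(l) = l^{-1} arcsin(l), b(l) = π l^{-1} - a(l), and suppose |B_3| ≤ C_0 l and |B_4| ≤ C_0 l. Then there exist constants C, l_0 > 0 such that for all 0 < l < l_0: ∫_{a(l)}^{b(l)} (B_3 cot(lx) + B_4 (1 - lx cot(lx))) · l^{-2} sin^2(lx) dx ≤ C l^{-2}. -/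
open Real MeasureTheory intervalIntegral

theorem Y_contribution (C0 : ℝ) (hC0 : 0 < C0) :
    ∃ C > (0 : ℝ), ∃ l0 > (0 : ℝ), ∀ l B3 B4 : ℝ, 0 < l → l < l0 →
      |B3| ≤ C0 * l → |B4| ≤ C0 * l →
      (∫ x in (l⁻¹ * arcsin l)..(π * l⁻¹ - l⁻¹ * arcsin l),
          (B3 * (cos (l * x) / sin (l * x))
            + B4 * (1 - l * x * (cos (l * x) / sin (l * x)))) * (l⁻¹ ^ 2 * sin (l * x) ^ 2))
        ≤ C * l⁻¹ ^ 2 := by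
  refine ⟨C0 * (2 + π) * π, by positivity, 1, one_pos, ?_⟩
  intro l B3 B4 hl hl1 hB3 hB4
  have hl0 : l ≠ 0 := ne_of_gt hl
  have hlinv : 0 < l⁻¹ := inv_pos.2 hl
  have hl1' : l ≤ 1 := le_of_lt hl1
  have harc : 0 < arcsin l := Real.arcsin_pos.2 hl
  have harc2 : arcsin l ≤ π / 2 := Real.arcsin_le_pi_div_two l
  set a := l⁻¹ * arcsin l with ha
  set b := π * l⁻¹ - l⁻¹ * arcsin l with hb
  have hab : a ≤ b := by
    rw [ha, hb]
    nlinarith [hlinv, harc2, mul_le_mul_of_nonneg_left harc2 hlinv.le]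
  set M : ℝ := C0 * (2 + π) * l⁻¹ with hM
  have hbound : ∀ x ∈ Set.uIoc a b,
      ‖(B3 * (cos (l * x) / sin (l * x))
            + B4 * (1 - l * x * (cos (l * x) / sin (l * x)))) * (l⁻¹ ^ 2 * sin (l * x) ^ 2)‖ ≤ M := by
    intro x hx
    rw [Set.uIoc_of_le hab] at hx
    obtain ⟨hx1, hx2⟩ := hx
    have hxpos : 0 < x := lt_trans (by positivity) hx1
    have ht0 : 0 ≤ l * x := by positivity
    have htπ : l * x ≤ π := by
      have : l * b = π - arcsin l := by
        rw [hb, mul_sub, mul_inv_cancel_left₀ hl0, mul_comm π, mul_inv_cancel_left₀ hl0]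
      nlinarith [mul_le_mul_of_nonneg_left hx2 hl.le]
    set s := sin (l * x) with hs
    set c := cos (l * x) with hc
    have key : (B3 * (c / s) + B4 * (1 - l * x * (c / s))) * (l⁻¹ ^ 2 * s ^ 2)
        = l⁻¹ ^ 2 * (B3 * (c * s) + B4 * (s ^ 2 - l * x * (c * s))) := by
      rcases eq_or_ne s 0 with h | h
      · simp [h]
      · field_simp
    rw [key, Real.norm_eq_abs, abs_mul, abs_of_nonneg (by positivity : (0:ℝ) ≤ l⁻¹ ^ 2)]
    have hcs : |c * s| ≤ 1 := by
      rw [abs_mul]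
      exact mul_le_one₀ (abs_cos_le_one _) (abs_nonneg _) (abs_sin_le_one _)
    have hs2 : |s ^ 2| ≤ 1 := by
      rw [abs_pow]
      exact pow_le_one₀ (abs_nonneg _) (abs_sin_le_one _)
    have h1 : |B3 * (c * s) + B4 * (s ^ 2 - l * x * (c * s))|
        ≤ |B3| * 1 + |B4| * (1 + π) := by
      calc |B3 * (c * s) + B4 * (s ^ 2 - l * x * (c * s))|
          ≤ |B3 * (c * s)| + |B4 * (s ^ 2 - l * x * (c * s))| := abs_add_le _ _
        _ = |B3| * |c * s| + |B4| * |s ^ 2 - l * x * (c * s)| := by simp only [abs_mul]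
        _ ≤ |B3| * 1 + |B4| * (1 + π) := by
            have h2 : |s ^ 2 - l * x * (c * s)| ≤ 1 + π := by
              calc |s ^ 2 - l * x * (c * s)| ≤ |s ^ 2| + |l * x * (c * s)| := abs_sub _ _
                _ = |s ^ 2| + (l * x) * |c * s| := by
                    rw [abs_mul, abs_of_nonneg ht0]
                _ ≤ 1 + π * 1 := by gcongr <;> first | exact hcs | exact hs2
                _ = 1 + π := by ring
            gcongr <;> first | exact hcs | exact h2
    have h3 : |B3| * 1 + |B4| * (1 + π) ≤ C0 * l * (2 + π) := by
      nlinarith [abs_nonneg B4, Real.pi_pos]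
    calc l⁻¹ ^ 2 * |B3 * (c * s) + B4 * (s ^ 2 - l * x * (c * s))|
        ≤ l⁻¹ ^ 2 * (C0 * l * (2 + π)) := by
          have := le_trans h1 h3
          gcongr
      _ = M := by rw [hM]; field_simp
  have hnorm := intervalIntegral.norm_integral_le_of_norm_le_const hbound
  have hM0 : 0 ≤ M := by
    have := Real.pi_pos
    positivity
  have hba : |b - a| ≤ π * l⁻¹ := by
    rw [abs_of_nonneg (by linarith), hb, ha]
    nlinarith [mul_pos hlinv harc]
  calc (∫ x in a..b,
          (B3 * (cos (l * x) / sin (l * x))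
            + B4 * (1 - l * x * (cos (l * x) / sin (l * x)))) * (l⁻¹ ^ 2 * sin (l * x) ^ 2))
      ≤ ‖∫ x in a..b,
          (B3 * (cos (l * x) / sin (l * x))
            + B4 * (1 - l * x * (cos (l * x) / sin (l * x)))) * (l⁻¹ ^ 2 * sin (l * x) ^ 2)‖ := by
        rw [Real.norm_eq_abs]; exact le_abs_self _
    _ ≤ M * |b - a| := hnorm
    _ ≤ M * (π * l⁻¹) := by gcongr
    _ = C0 * (2 + π) * π * l⁻¹ ^ 2 := by rw [hM]; ring
end
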